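/- Lemma 1 (propagation of dual-feasible solutions): let ((λ_t, ρ_t)_{t=0}^T, (μ_t, ν̲_t, ν̄_t, σ_t)_{t=0}^{T−1}) be dual feasible. Define shifted multipliers by (λ'_t, ρ'_t) := (λ_{t+1}, ρ_{t+1}) for t = 0,…,T−1, (λ'_T, ρ'_T) := (0, 0), (μ'_t, ν̲'_t, ν̄'_t, σ'_t) := (μ_{t+1}, ν̲_{t+1}, ν̄_{t+1}, σ_{t+1}) for t = 0,…,T−2, and (μ'_{T−1}, ν̲'_{T−1}, ν̄'_{T−1}, σ'_{T−1}) := (0, 0, 0, 0). Then the shifted multipliers are dual feasible. -/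
import Mathlib


open Matrix

/-- The squared Euclidean norm `|v|²` of a vector in `ℝ^k`. -/
noncomputable def sqNorm {k : ℕ} (v : Fin k → ℝ) : ℝ := ∑ i, v i ^ 2

variable {n p q r c m : ℕ}

/-- Primal feasibility of a trajectory `((x_t)_{t=0}^T, (u_t)_{t=0}^{T-1})` for the data
`(x̄, (v̲_t), (v̄_t))` of the QP relaxation of the hybrid MPC problem. -/
def PrimalFeasible (T : ℕ)
    (A : Matrix (Fin n) (Fin n) ℝ) (B : Matrix (Fin n) (Fin p) ℝ)
    (F : Matrix (Fin c) (Fin n) ℝ) (G : Matrix (Fin c) (Fin p) ℝ)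
    (V : Matrix (Fin m) (Fin p) ℝ) (h : Fin c → ℝ)
    (xbar : Fin n → ℝ) (vlo vhi : ℕ → Fin m → ℝ)
    (x : ℕ → Fin n → ℝ) (u : ℕ → Fin p → ℝ) : Prop :=
  x 0 = xbar ∧
  (∀ t < T, x (t + 1) = A *ᵥ x t + B *ᵥ u t) ∧
  (∀ t < T, ∀ i, (F *ᵥ x t + G *ᵥ u t) i ≤ h i) ∧
  (∀ t < T, ∀ i, vlo t i ≤ (V *ᵥ u t) i ∧ (V *ᵥ u t) i ≤ vhi t i)

/-- Cost `Σ_{t=0}^T |Q x_t|² + Σ_{t=0}^{T-1} |R u_t|²` of a trajectory. -/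
noncomputable def trajCost (T : ℕ) (Q : Matrix (Fin q) (Fin n) ℝ) (R : Matrix (Fin r) (Fin p) ℝ)
    (x : ℕ → Fin n → ℝ) (u : ℕ → Fin p → ℝ) : ℝ :=
  ∑ t ∈ Finset.range (T + 1), sqNorm (Q *ᵥ x t) + ∑ t ∈ Finset.range T, sqNorm (R *ᵥ u t)

/-- Dual feasibility of a tuple of multipliers
`((λ_t, ρ_t)_{t=0}^T, (μ_t, ν̲_t, ν̄_t, σ_t)_{t=0}^{T-1})`.
Note that dual feasibility does not depend on the bound sequences `(v̲_t), (v̄_t)`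
nor on the initial state `x̄`. -/
def DualFeasible (T : ℕ)
    (A : Matrix (Fin n) (Fin n) ℝ) (B : Matrix (Fin n) (Fin p) ℝ)
    (Q : Matrix (Fin q) (Fin n) ℝ) (R : Matrix (Fin r) (Fin p) ℝ)
    (F : Matrix (Fin c) (Fin n) ℝ) (G : Matrix (Fin c) (Fin p) ℝ)
    (V : Matrix (Fin m) (Fin p) ℝ)
    (lam : ℕ → Fin n → ℝ) (rho : ℕ → Fin q → ℝ)
    (mu : ℕ → Fin c → ℝ) (nlo nhi : ℕ → Fin m → ℝ) (sig : ℕ → Fin r → ℝ) : Prop :=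
  (∀ t < T, Qᵀ *ᵥ rho t + lam t - Aᵀ *ᵥ lam (t + 1) + Fᵀ *ᵥ mu t = 0) ∧
  Qᵀ *ᵥ rho T + lam T = 0 ∧
  (∀ t < T, Rᵀ *ᵥ sig t - Bᵀ *ᵥ lam (t + 1) + Gᵀ *ᵥ mu t + Vᵀ *ᵥ (nhi t - nlo t) = 0) ∧
  (∀ t < T, ∀ i, 0 ≤ mu t i) ∧ (∀ t < T, ∀ i, 0 ≤ nlo t i) ∧ (∀ t < T, ∀ i, 0 ≤ nhi t i)

/-- The dual objective
`d := −Σ_{t=0}^T |ρ_t/2|² − Σ_{t=0}^{T−1}(|σ_t/2|² + hᵀμ_t + v̄_tᵀν̄_t − v̲_tᵀν̲_t) − x̄ᵀλ_0`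
for the data `(x̄, (v̲_t), (v̄_t))`. -/
noncomputable def dualObj (T : ℕ) (h : Fin c → ℝ) (xbar : Fin n → ℝ) (vlo vhi : ℕ → Fin m → ℝ)
    (lam : ℕ → Fin n → ℝ) (rho : ℕ → Fin q → ℝ)
    (mu : ℕ → Fin c → ℝ) (nlo nhi : ℕ → Fin m → ℝ) (sig : ℕ → Fin r → ℝ) : ℝ :=
  -(∑ t ∈ Finset.range (T + 1), sqNorm (fun i => rho t i / 2))
    - ∑ t ∈ Finset.range T,
        (sqNorm (fun i => sig t i / 2) + h ⬝ᵥ mu t + vhi t ⬝ᵥ nhi t - vlo t ⬝ᵥ nlo t)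
    - xbar ⬝ᵥ lam 0

/-- Shift of a `{0,…,T}`-indexed family of multipliers (the `λ_t` or `ρ_t`):
`w'_t := w_{t+1}` for `t = 0,…,T−1` and `w'_T := 0`. -/
noncomputable def shiftT (T : ℕ) {k : ℕ} (w : ℕ → Fin k → ℝ) : ℕ → Fin k → ℝ :=
  fun t => if t < T then w (t + 1) else 0

/-- Shift of a `{0,…,T−1}`-indexed family (the `μ_t, ν̲_t, ν̄_t, σ_t` or the lower
bounds `v̲_t`): `w'_t := w_{t+1}` for `t = 0,…,T−2` and `w'_{T−1} := 0`. -/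
noncomputable def shiftS (T : ℕ) {k : ℕ} (w : ℕ → Fin k → ℝ) : ℕ → Fin k → ℝ :=
  fun t => if t + 1 < T then w (t + 1) else 0

/-- Shift of the upper bounds `v̄_t`: `v̄'_t := v̄_{t+1}` for `t = 0,…,T−2` and
`v̄'_{T−1} := 1` (the all-ones vector). -/
noncomputable def shiftHi (T : ℕ) {k : ℕ} (w : ℕ → Fin k → ℝ) : ℕ → Fin k → ℝ :=
  fun t => if t + 1 < T then w (t + 1) else fun _ => 1

/-- **Lemma 1 (propagation of dual-feasible solutions):** shifting a dual-feasible
tuple of multipliers one step backwards in time (padding with zeros at the end)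
yields a dual-feasible tuple. -/
theorem shifted_multipliers_dual_feasible (n p q r c m T : ℕ) (hT : 1 ≤ T)
    (A : Matrix (Fin n) (Fin n) ℝ) (B : Matrix (Fin n) (Fin p) ℝ)
    (Q : Matrix (Fin q) (Fin n) ℝ) (R : Matrix (Fin r) (Fin p) ℝ)
    (F : Matrix (Fin c) (Fin n) ℝ) (G : Matrix (Fin c) (Fin p) ℝ)
    (V : Matrix (Fin m) (Fin p) ℝ) (h : Fin c → ℝ)
    (lam : ℕ → Fin n → ℝ) (rho : ℕ → Fin q → ℝ)
    (mu : ℕ → Fin c → ℝ) (nlo nhi : ℕ → Fin m → ℝ) (sig : ℕ → Fin r → ℝ)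
    (hdual : DualFeasible T A B Q R F G V lam rho mu nlo nhi sig) :
    DualFeasible T A B Q R F G V
      (shiftT T lam) (shiftT T rho) (shiftS T mu) (shiftS T nlo) (shiftS T nhi)
      (shiftS T sig) := by
  obtain ⟨h1, h2, h3, h4, h5, h6⟩ := hdual
  refine ⟨?_, ?_, ?_, ?_, ?_, ?_⟩
  · intro t ht
    simp only [shiftT, shiftS, ht, if_pos]
    rcases lt_or_eq_of_le (Nat.succ_le_of_lt ht) with h' | h'
    · simp only [h', if_pos]
      exact h1 (t + 1) h'
    · have hne : ¬ (t + 1 < T) := by omega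
      have hTe : t + 1 = T := by omega
      simp only [if_neg hne, hTe, lt_self_iff_false, if_false, Matrix.mulVec_zero, sub_zero, add_zero]
      exact h2
  · simp [shiftT, Matrix.mulVec_zero]
  · intro t ht
    simp only [shiftT, shiftS]
    rcases lt_or_eq_of_le (Nat.succ_le_of_lt ht) with h' | h'
    · simp only [h', if_pos]
      exact h3 (t + 1) h'
    · have hne : ¬ (t + 1 < T) := by omega
      simp [if_neg hne, Matrix.mulVec_zero]
  · intro t ht i
    simp only [shiftS]
    split
    · exact h4 (t + 1) ‹_› i
    · simp
  · intro t ht i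
    simp only [shiftS]
    split
    · exact h5 (t + 1) ‹_› i
    · simp
  · intro t ht i
    simp only [shiftS]
    split
    · exact h6 (t + 1) ‹_› i
    · simp
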